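/- Let F₁ ≠ F₂ be points in the Euclidean plane, O the midpoint of F₁F₂, and let A, B, X form a linkage configuration (dist F₁ A = dist F₂ B = dist F₁ F₂ / √2, dist A B = dist F₁ F₂, A and B strictly on opposite sides of line F₁F₂, X the midpoint of AB) with X ≠ O. Suppose the lines F₁A and F₂B meet in a point P, and let Q be the reflection of P across the line F₁F₂. Then Q is the image of X under inversion in the circle with center O and radius dist O F₁; that is, Q lies on the ray from O through X and dist O X * dist O Q = (dist O F₁)^2. -/

import Mathlib

open EuclideanGeometry Real
open scoped RealInnerProductSpace

theorem linkage_reflection_is_inversion_of_midpoint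
    (F₁ F₂ A B X O P Q : EuclideanSpace ℝ (Fin 2))
    (hF : F₁ ≠ F₂)
    (hO : O = midpoint ℝ F₁ F₂)
    (hA : dist F₁ A = dist F₁ F₂ / Real.sqrt 2)
    (hB : dist F₂ B = dist F₁ F₂ / Real.sqrt 2)
    (hAB : dist A B = dist F₁ F₂)
    (hSide : (affineSpan ℝ ({F₁, F₂} : Set (EuclideanSpace ℝ (Fin 2)))).SOppSide A B)
    (hX : X = midpoint ℝ A B)
    (hXO : X ≠ O)
    (hP₁ : P ∈ affineSpan ℝ ({F₁, A} : Set (EuclideanSpace ℝ (Fin 2))))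
    (hP₂ : P ∈ affineSpan ℝ ({F₂, B} : Set (EuclideanSpace ℝ (Fin 2))))
    (hQ : Q = EuclideanGeometry.reflection
      (affineSpan ℝ ({F₁, F₂} : Set (EuclideanSpace ℝ (Fin 2)))) P) :
    Q = EuclideanGeometry.inversion O (dist O F₁) X ∧
      SameRay ℝ (X -ᵥ O) (Q -ᵥ O) ∧
      dist O X * dist O Q = dist O F₁ ^ 2 := by
  set c : ℝ := dist F₁ F₂ with hc
  have hc0 : (0:ℝ) < c := dist_pos.mpr hF
  set u : (EuclideanSpace ℝ (Fin 2)) := A -ᵥ F₁ with hudef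
  set v : (EuclideanSpace ℝ (Fin 2)) := B -ᵥ F₂ with hvdef
  set f : (EuclideanSpace ℝ (Fin 2)) := F₂ -ᵥ F₁ with hfdef
  set a : ℝ := c^2/2 with ha
  have ha0 : 0 < a := by positivity
  set w : ℝ := ⟪u, v⟫ with hwdef
  -- basic norms
  have hnf : ‖f‖ = c := by rw [hfdef, ← dist_eq_norm_vsub (EuclideanSpace ℝ (Fin 2)), dist_comm]
  have hnu : ‖u‖ = c / Real.sqrt 2 := by
    rw [hudef, ← dist_eq_norm_vsub (EuclideanSpace ℝ (Fin 2)), dist_comm]; exact hA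
  have hnv : ‖v‖ = c / Real.sqrt 2 := by
    rw [hvdef, ← dist_eq_norm_vsub (EuclideanSpace ℝ (Fin 2)), dist_comm]; exact hB
  have hsq2 : Real.sqrt 2 ^ 2 = 2 := Real.sq_sqrt (by norm_num)
  have hff : ⟪f, f⟫ = 2 * a := by
    rw [real_inner_self_eq_norm_sq, hnf]; rw [ha]; ring
  have huu : ⟪u, u⟫ = a := by
    rw [real_inner_self_eq_norm_sq, hnu, div_pow, hsq2, ha]
  have hvv : ⟪v, v⟫ = a := by
    rw [real_inner_self_eq_norm_sq, hnv, div_pow, hsq2, ha]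
  -- the |AB| relation
  have hABv : A -ᵥ B = u - v - f := by
    rw [hudef, hvdef, hfdef]
    simp only [vsub_eq_sub]; abel
  have hABi : ⟪A -ᵥ B, A -ᵥ B⟫ = 2*a := by
    rw [real_inner_self_eq_norm_sq, ← dist_eq_norm_vsub (EuclideanSpace ℝ (Fin 2)), hAB, ha]; ring
  have hwrel : w + ⟪u, f⟫ - ⟪v, f⟫ = a := by
    rw [hABv] at hABi
    simp only [inner_sub_left, inner_sub_right] at hABi
    have c0 : ⟪u, v⟫ = w := hwdef.symm
    have c1 : ⟪v, u⟫ = w := (real_inner_comm u v).trans hwdef.symm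
    have c2 : ⟪f, u⟫ = ⟪u, f⟫ := real_inner_comm u f
    have c3 : ⟪f, v⟫ = ⟪v, f⟫ := real_inner_comm v f
    linarith [huu, hvv, hff, c0, c1, c2, c3, hABi]
  -- the intersection point
  obtain ⟨s, hs⟩ : ∃ r : ℝ, r • (A -ᵥ F₁) = P -ᵥ F₁ :=
    vadd_left_mem_affineSpan_pair.mp (by rw [vsub_vadd]; exact hP₁)
  obtain ⟨t, ht⟩ : ∃ r : ℝ, r • (B -ᵥ F₂) = P -ᵥ F₂ :=
    vadd_left_mem_affineSpan_pair.mp (by rw [vsub_vadd]; exact hP₂)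
  rw [← hudef] at hs
  rw [← hvdef] at ht
  have hfeq : s • u - t • v = f := by
    rw [hs, ht, hfdef]; simp only [vsub_eq_sub]; abel
  have hsuf : ⟪u, f⟫ = s*a - t*w := by
    rw [← hfeq, inner_sub_right, real_inner_smul_right, real_inner_smul_right, huu, ← hwdef]
  have hsvf : ⟪v, f⟫ = s*w - t*a := by
    rw [← hfeq, inner_sub_right, real_inner_smul_right, real_inner_smul_right, hvv,
      real_inner_comm u v, ← hwdef]
  have hC1 : s^2*a + t^2*a - 2*s*t*w = 2*a := by
    have h2 : ⟪s • u - t • v, f⟫ = 2*a := by rw [hfeq, hff]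
    rw [inner_sub_left, real_inner_smul_left, real_inner_smul_left, hsuf, hsvf] at h2
    linear_combination h2
  -- geometry of X, O
  have hXmO : X -ᵥ O = (2⁻¹:ℝ) • (u + v) := by
    rw [hX, hO, midpoint_vsub_midpoint, ← hudef, ← hvdef, midpoint_eq_smul_add]
    norm_num
  have huv0 : u + v ≠ 0 := by
    intro h
    apply hXO
    have h2 : X -ᵥ O = 0 := by rw [hXmO, h, smul_zero]
    exact vsub_eq_zero_iff_eq.mp h2
  have hNorm : ⟪u + v, u + v⟫ = 2*(a + w) := by
    simp only [inner_add_left, inner_add_right]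
    have c1 : ⟪v, u⟫ = w := (real_inner_comm u v).trans hwdef.symm
    rw [huu, hvv, c1, ← hwdef]; ring
  have hNpos : 0 < a + w := by
    have h : (0:ℝ) < ‖u + v‖^2 := pow_pos (norm_pos_iff.mpr huv0) 2
    rw [← real_inner_self_eq_norm_sq, hNorm] at h; linarith
  have hfdir : f ∈ (affineSpan ℝ ({F₁, F₂} : Set (EuclideanSpace ℝ (Fin 2)))).direction := by
    rw [direction_affineSpan, vectorSpan_pair]
    refine Submodule.mem_span_singleton.mpr ⟨-1, ?_⟩
    rw [hfdef]; simp only [vsub_eq_sub]; module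
  have hprod : ‖u‖ * ‖v‖ = a := by
    rw [hnu, hnv, div_mul_div_comm, Real.mul_self_sqrt (by norm_num : (0:ℝ) ≤ 2), ha]
    ring
  have hwlta : w < a := by
    have hle : w ≤ a := by
      rw [hwdef]
      exact le_trans (real_inner_le_norm u v) (le_of_eq hprod)
    have hne : w ≠ a := by
      intro h
      have h1 : ⟪u, v⟫ = ‖u‖ * ‖v‖ := by rw [← hwdef, h, hprod]
      have h2 := inner_eq_norm_mul_iff_real.mp h1
      rw [hnu, hnv] at h2
      have hcs : (c / Real.sqrt 2) ≠ 0 := by positivity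
      have huveq : u = v := smul_right_injective _ hcs h2
      have h3 : B -ᵥ A = f := by
        have h4 : A -ᵥ F₁ = B -ᵥ F₂ := by rw [← hudef, ← hvdef, huveq]
        rw [hfdef]; simp only [vsub_eq_sub] at h4 ⊢
        have h5 : B - A - (F₂ - F₁) = B - F₂ - (A - F₁) := by abel
        have h6 : B - A - (F₂ - F₁) = 0 := by rw [h5, ← h4]; exact sub_self _
        exact sub_eq_zero.mp h6
      have hBA : B = f +ᵥ A := by rw [eq_vadd_iff_vsub_eq]; exact h3
      rw [hBA] at hSide
      exact ((affineSpan ℝ ({F₁, F₂} : Set (EuclideanSpace ℝ (Fin 2)))).not_sOppSide_self A) ((AffineSubspace.sOppSide_vadd_right_iff hfdir).mp hSide)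
    exact lt_of_le_of_ne hle hne
  have hst1 : s + t = 1 := by
    rw [hsuf, hsvf] at hwrel
    have h0 : (s + t - 1) * (a - w) = 0 := by linear_combination hwrel
    rcases mul_eq_zero.mp h0 with h | h
    · linarith
    · exact absurd h (sub_ne_zero.mpr hwlta.ne')
  have ht1 : t = 1 - s := by linarith
  subst ht1
  set μ : ℝ := a / (2*(a+w)) with hμ
  have hμ0 : 0 < μ := by rw [hμ]; positivity
  have hst2 : s * (1-s) = -μ := by
    rw [hμ]
    field_simp
    linear_combination -hC1
  -- the line F₁F₂ and the orthogonal projection of P on it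
  have hOL : O ∈ affineSpan ℝ ({F₁, F₂} : Set (EuclideanSpace ℝ (Fin 2))) := by
    rw [hO]
    exact (wbtw_midpoint ℝ F₁ F₂).mem_affineSpan
  have hOF₁ : O -ᵥ F₁ = (2⁻¹:ℝ) • f := by
    rw [hO, hfdef, midpoint_vsub_left]; norm_num
  have hPO : P -ᵥ O = s • u - (2⁻¹:ℝ) • f := by
    rw [← vsub_sub_vsub_cancel_right P O F₁, ← hs, hOF₁]
  have hq₀L : ((s^2 - (1-s)^2)/4) • f +ᵥ O ∈ affineSpan ℝ ({F₁, F₂} : Set (EuclideanSpace ℝ (Fin 2))) :=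
    AffineSubspace.vadd_mem_of_mem_direction (Submodule.smul_mem _ _ hfdir) hOL
  have hnval : P -ᵥ (((s^2 - (1-s)^2)/4) • f +ᵥ O) = s • u - (2⁻¹:ℝ) • f - ((s^2 - (1-s)^2)/4) • f := by
    rw [vsub_vadd_eq_vsub_sub, hPO]
  have hninner : ⟪f, P -ᵥ (((s^2 - (1-s)^2)/4) • f +ᵥ O)⟫ = 0 := by
    rw [hnval]
    simp only [inner_sub_right, real_inner_smul_right]
    rw [real_inner_comm u f, hsuf, hff]
    linear_combination hC1 / 2
  have hndir : P -ᵥ (((s^2 - (1-s)^2)/4) • f +ᵥ O) ∈ (affineSpan ℝ ({F₁, F₂} : Set (EuclideanSpace ℝ (Fin 2)))).directionᗮ := by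
    rw [direction_affineSpan, vectorSpan_pair,
      Submodule.mem_orthogonal_singleton_iff_inner_right]
    have h1 : F₁ -ᵥ F₂ = -f := by rw [hfdef]; simp only [vsub_eq_sub]; abel
    rw [h1, inner_neg_left, hninner, neg_zero]
  have hrefl : EuclideanGeometry.reflection (affineSpan ℝ ({F₁, F₂} : Set (EuclideanSpace ℝ (Fin 2)))) P =
      -(P -ᵥ (((s^2 - (1-s)^2)/4) • f +ᵥ O)) +ᵥ (((s^2 - (1-s)^2)/4) • f +ᵥ O) := by
    conv_lhs => rw [show P = (P -ᵥ (((s^2 - (1-s)^2)/4) • f +ᵥ O)) +ᵥ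
      (((s^2 - (1-s)^2)/4) • f +ᵥ O) from (vsub_vadd _ _).symm]
    exact EuclideanGeometry.reflection_orthogonal_vadd hq₀L hndir
  have hQO : Q -ᵥ O = μ • (u + v) := by
    rw [hQ, hrefl, vadd_vsub_assoc, vadd_vsub, hnval, ← hfeq]
    match_scalars
    · linear_combination -hst2
    · linear_combination -hst2
  -- final numeric facts
  have hnormuv : ‖u + v‖^2 = 2*(a+w) := by rw [← real_inner_self_eq_norm_sq, hNorm]
  have hnuv0 : (0:ℝ) < ‖u + v‖ := norm_pos_iff.mpr huv0
  have hdOF : dist O F₁ = c/2 := by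
    rw [hO, dist_midpoint_left, ← hc]
    norm_num
    ring
  have hdXO : dist X O = ‖u + v‖ / 2 := by
    rw [dist_eq_norm_vsub (EuclideanSpace ℝ (Fin 2)), hXmO, norm_smul]
    norm_num
    ring
  have hdOX : dist O X = ‖u + v‖ / 2 := by rw [dist_comm]; exact hdXO
  have hdOQ : dist O Q = μ * ‖u + v‖ := by
    rw [dist_comm, dist_eq_norm_vsub (EuclideanSpace ℝ (Fin 2)), hQO, norm_smul,
      Real.norm_eq_abs, abs_of_pos hμ0]
  have hc2 : c^2 = 2*a := by rw [ha]; ring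
  refine ⟨?_, ?_, ?_⟩
  · have hinv : EuclideanGeometry.inversion O (dist O F₁) X =
        ((dist O F₁ / dist X O)^2) • (X -ᵥ O) +ᵥ O := rfl
    rw [hinv, hdOF, hdXO, hXmO, eq_vadd_iff_vsub_eq, hQO, smul_smul]
    congr 1
    rw [hμ, div_pow, div_pow]
    field_simp
    linear_combination a * 2 * hnormuv - (a + w) * 2 * hc2 - c^2/2 * hnormuv
  · rw [hXmO, hQO]
    have h2 : μ • (u+v) = (2*μ) • ((2⁻¹:ℝ) • (u + v)) := by module
    rw [h2]
    exact SameRay.sameRay_nonneg_smul_right _ (by positivity)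
  · rw [hdOX, hdOQ, hdOF, hμ, div_pow]
    field_simp
    linear_combination 2 * c^2 * hnormuv - 3 * c^2 / 2 * hnormuv
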